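/- Let (X,Σ,μ) be a Lebesgue probability space with an ergodic aperiodic measure preserving transformation θ, Tf = f∘θ, and let (b_n) be a sequence tending to infinity with b_n/n decreasing to 0. Then there exists 0 ≤ h ∈ L¹(μ) such that limsup_n b_n·T^n h/n = ∞ μ-a.e. -/

import Mathlib

open MeasureTheory Filter Topology ENNReal Set

set_option linter.unusedSectionVars false
set_option linter.unusedVariables false
set_option maxHeartbeats 1000000

section auxlemmas
variable {X : Type*} [MeasurableSpace X] {μ : Measure X} {θ : X → X} {A : Set X}

/-- Level sets of the first hitting time of `A`. -/
def lev (θ : X → X) (A : Set X) (j : ℕ) : Set X :=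
  {x | θ^[j] x ∈ A ∧ ∀ i < j, θ^[i] x ∉ A}

/-- The union of the levels whose index is a multiple of `N`; a "Rokhlin-like" set of
measure at most `μ A + 1/N` which is hit by (a.e.) every orbit within any time window
of length `N`. -/
def twr (θ : X → X) (A : Set X) (N : ℕ) : Set X := ⋃ i, lev θ A (i * N)

lemma lev_measurable (hθ : Measurable θ) (hA : MeasurableSet A) (j : ℕ) :
    MeasurableSet (lev θ A j) := by
  have hit : ∀ i : ℕ, Measurable (θ^[i]) := fun i => hθ.iterate i
  have : lev θ A j = (θ^[j] ⁻¹' A) ∩ ⋂ i ∈ Finset.range j, (θ^[i] ⁻¹' A)ᶜ := by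
    ext x; simp [lev, Finset.mem_range]
  rw [this]
  exact ((hit j) hA).inter <| MeasurableSet.biInter (Finset.range j).countable_toSet
      fun i _ => ((hit i) hA).compl

lemma twr_meas (hθ : Measurable θ) (hA : MeasurableSet A) (N : ℕ) :
    MeasurableSet (twr θ A N) :=
  MeasurableSet.iUnion fun i => lev_measurable hθ hA (i * N)

lemma lev_disjoint : Pairwise (Function.onFun Disjoint (lev θ A)) := by
  intro i j hij
  wlog h : i < j generalizing i j
  · exact (this hij.symm (by omega)).symm
  refine Set.disjoint_left.2 fun x hxi hxj => ?_
  exact hxj.2 i h hxi.1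

lemma lev_succ_subset (j : ℕ) : lev θ A (j + 1) ⊆ θ ⁻¹' lev θ A j := by
  intro x hx
  refine ⟨?_, fun i hi => ?_⟩
  · have := hx.1; rwa [Function.iterate_succ_apply] at this
  · have := hx.2 (i + 1) (by omega); rwa [Function.iterate_succ_apply] at this

lemma measure_lev_antitone (hθ : MeasurePreserving θ μ μ) (hθm : Measurable θ)
    (hA : MeasurableSet A) : Antitone (fun j => μ (lev θ A j)) := by
  have step : ∀ j, μ (lev θ A (j + 1)) ≤ μ (lev θ A j) := by
    intro j
    calc μ (lev θ A (j + 1)) ≤ μ (θ ⁻¹' lev θ A j) := measure_mono (lev_succ_subset j)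
    _ = μ (lev θ A j) := hθ.measure_preimage (lev_measurable hθm hA j).nullMeasurableSet
  exact antitone_nat_of_succ_le step

lemma measure_twr_le [IsProbabilityMeasure μ] (hθ : MeasurePreserving θ μ μ)
    (hθm : Measurable θ) (hA : MeasurableSet A) {N : ℕ} (hN : 1 ≤ N) :
    μ (twr θ A N) ≤ μ A + (N : ℝ≥0∞)⁻¹ := by
  have hanti : Antitone (fun j => μ (lev θ A j)) := measure_lev_antitone hθ hθm hA
  have hmeas : ∀ j, MeasurableSet (lev θ A j) := lev_measurable hθm hA
  have hdisj : Pairwise (Function.onFun Disjoint (lev θ A)) := lev_disjoint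
  have hsum : ∑' j, μ (lev θ A j) ≤ 1 := by
    rw [← measure_iUnion hdisj hmeas]
    simpa using prob_le_one
  have key : ∑' i : ℕ, μ (lev θ A ((i + 1) * N)) ≤ (N : ℝ≥0∞)⁻¹ := by
    have hNmul : (N : ℝ≥0∞) * ∑' i : ℕ, μ (lev θ A ((i + 1) * N)) ≤ 1 := by
      have einj : Function.Injective (fun p : ℕ × Fin N => p.1 * N + (p.2 : ℕ) + 1) := by
        rintro ⟨i, d⟩ ⟨i', d'⟩ h
        simp only [Prod.mk.injEq]
        have hd : (d : ℕ) < N := d.2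
        have hd' : (d' : ℕ) < N := d'.2
        have h' : i * N + (d : ℕ) = i' * N + (d' : ℕ) := by
          have := h; simp only at this; omega
        have hi : i = i' := by
          rcases Nat.lt_trichotomy i i' with hlt | heq | hgt
          · nlinarith [Nat.succ_le_of_lt hlt]
          · exact heq
          · nlinarith [Nat.succ_le_of_lt hgt]
        subst hi
        constructor
        · rfl
        · ext; omega
      calc (N : ℝ≥0∞) * ∑' i : ℕ, μ (lev θ A ((i + 1) * N))
          = ∑' i : ℕ, ∑' d : Fin N, μ (lev θ A ((i + 1) * N)) := by
            rw [← ENNReal.tsum_mul_left]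
            congr 1; ext i
            rw [tsum_fintype]
            simp [Finset.sum_const, nsmul_eq_mul]
        _ ≤ ∑' i : ℕ, ∑' d : Fin N, μ (lev θ A (i * N + (d : ℕ) + 1)) := by
            refine ENNReal.tsum_le_tsum fun i => ENNReal.tsum_le_tsum fun d => ?_
            apply hanti
            have : (d : ℕ) < N := d.2
            nlinarith
        _ = ∑' p : ℕ × Fin N, μ (lev θ A (p.1 * N + (p.2 : ℕ) + 1)) :=
            (ENNReal.tsum_prod'
              (f := fun p : ℕ × Fin N => μ (lev θ A (p.1 * N + (p.2 : ℕ) + 1)))).symm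
        _ ≤ ∑' j : ℕ, μ (lev θ A j) :=
            ENNReal.tsum_comp_le_tsum_of_injective einj (fun j => μ (lev θ A j))
        _ ≤ 1 := hsum
    have hN0 : (N : ℝ≥0∞) ≠ 0 := by
      have : N ≠ 0 := by omega
      exact_mod_cast this
    have hNtop : (N : ℝ≥0∞) ≠ ⊤ := by simp
    rw [mul_comm] at hNmul
    rw [← ENNReal.le_div_iff_mul_le (Or.inl hN0) (Or.inl hNtop)] at hNmul
    simpa [ENNReal.div_eq_inv_mul, one_div] using hNmul
  calc μ (twr θ A N) ≤ μ (lev θ A 0) + μ (⋃ i : ℕ, lev θ A ((i + 1) * N)) := by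
        have : twr θ A N ⊆ lev θ A 0 ∪ ⋃ i : ℕ, lev θ A ((i + 1) * N) := by
          intro x hx
          rcases mem_iUnion.1 hx with ⟨i, hi⟩
          rcases Nat.eq_zero_or_pos i with h0 | hpos
          · left; simpa [h0] using hi
          · right; exact mem_iUnion.2 ⟨i - 1, by simpa [Nat.sub_add_cancel hpos] using hi⟩
        exact le_trans (measure_mono this) (measure_union_le _ _)
    _ ≤ μ A + (N : ℝ≥0∞)⁻¹ := by
        gcongr
        · intro x hx
          have hx1 : θ^[0] x ∈ A := hx.1
          simpa using hx1
        · exact le_trans (measure_iUnion_le _) key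

lemma twr_hit {N : ℕ} (hN : 1 ≤ N) (x : X) (t : ℕ)
    (hex : ∃ n, θ^[n] (θ^[t] x) ∈ A) :
    ∃ n, t ≤ n ∧ n < t + N ∧ θ^[n] x ∈ twr θ A N := by
  classical
  set τ := Nat.find hex with hτdef
  have hτ : θ^[τ] (θ^[t] x) ∈ A := Nat.find_spec hex
  have hτmin : ∀ i < τ, θ^[i] (θ^[t] x) ∉ A := fun i hi => Nat.find_min hex hi
  have hdm : N * (τ / N) + τ % N = τ := Nat.div_add_mod τ N
  have hc : τ / N * N = N * (τ / N) := Nat.mul_comm _ _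
  have hmlt : τ % N < N := Nat.mod_lt τ (by omega)
  refine ⟨t + τ % N, by omega, by omega, ?_⟩
  refine mem_iUnion.2 ⟨τ / N, ?_, ?_⟩
  · have h1 : τ / N * N + (t + τ % N) = τ + t := by omega
    rw [← Function.iterate_add_apply, h1, Function.iterate_add_apply]
    exact hτ
  · intro i hi
    have h2 : i + (t + τ % N) = (i + τ % N) + t := by omega
    rw [← Function.iterate_add_apply, h2, Function.iterate_add_apply]
    exact hτmin (i + τ % N) (by omega)

lemma ergodic_hits [IsProbabilityMeasure μ] (herg : Ergodic θ μ)
    (hθm : Measurable θ) (hA : MeasurableSet A) (hA0 : μ A ≠ 0) :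
    ∀ᵐ x ∂μ, ∀ t : ℕ, ∃ n, θ^[n] (θ^[t] x) ∈ A := by
  set G := ⋃ n : ℕ, θ^[n] ⁻¹' A with hG
  have hGm : MeasurableSet G := MeasurableSet.iUnion fun n => (hθm.iterate n) hA
  have hsub : θ ⁻¹' G ⊆ G := by
    intro x hx
    rcases mem_iUnion.1 hx with ⟨n, hn⟩
    refine mem_iUnion.2 ⟨n + 1, ?_⟩
    simp only [mem_preimage] at hn ⊢
    rw [Function.iterate_succ_apply]
    exact hn
  have hG1 : μ G = 1 := by
    rcases herg.ae_empty_or_univ_of_preimage_ae_le hGm.nullMeasurableSet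
        (HasSubset.Subset.eventuallyLE hsub) with h | h
    · exfalso
      apply hA0
      have : μ G = 0 := by
        rw [measure_congr h]; simp
      exact measure_mono_null (by exact subset_iUnion_of_subset 0 (by simp)) this
    · rw [measure_congr h]; simp
  have hall : ∀ᵐ x ∂μ, ∀ t : ℕ, θ^[t] x ∈ G := by
    rw [ae_all_iff]
    intro t
    have : μ (θ^[t] ⁻¹' G) = 1 := by
      rw [(herg.toMeasurePreserving.iterate t).measure_preimage hGm.nullMeasurableSet, hG1]
    rw [ae_iff]
    have hcompl : μ ((θ^[t] ⁻¹' G)ᶜ) = 0 := by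
      have hm : MeasurableSet (θ^[t] ⁻¹' G) := (hθm.iterate t) hGm
      rw [measure_compl hm (measure_ne_top μ _), this]
      simp
    exact measure_mono_null (fun x hx => hx) hcompl
  filter_upwards [hall] with x hx t
  rcases mem_iUnion.1 (hx t) with ⟨n, hn⟩
  exact ⟨n, hn⟩

end auxlemmas

section auxstd
variable {X : Type*} [MeasurableSpace X] [StandardBorelSpace X]

lemma singletons_null (μ : Measure X) [IsProbabilityMeasure μ]
    {θ : X → X} (hθ : MeasurePreserving θ μ μ)
    (haper : μ {x | ∃ n : ℕ, 0 < n ∧ θ^[n] x = x} = 0) (x₀ : X) : μ {x₀} = 0 := by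
  by_contra hne
  have hsingm : ∀ y : X, MeasurableSet ({y} : Set X) := fun y => measurableSet_singleton y
  have hmono : ∀ y : X, μ {y} ≤ μ {θ y} := by
    intro y
    have h1 : ({y} : Set X) ⊆ θ ⁻¹' {θ y} := by simp
    calc μ {y} ≤ μ (θ ⁻¹' {θ y}) := measure_mono h1
      _ = μ {θ y} := hθ.measure_preimage (hsingm _).nullMeasurableSet
  have horb : ∀ n : ℕ, μ {x₀} ≤ μ {θ^[n] x₀} := by
    intro n
    induction n with
    | zero => simp
    | succ n ih =>
        refine ih.trans ?_
        rw [Function.iterate_succ_apply']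
        exact hmono _
  by_cases hinj : Function.Injective (fun n : ℕ => θ^[n] x₀)
  · obtain ⟨m, hm⟩ := ENNReal.exists_inv_nat_lt hne
    have hmn0 : m ≠ 0 := by
      intro h; rw [h] at hm; simp at hm
    have hdisj : ∀ i ∈ Finset.range m, ∀ j ∈ Finset.range m, i ≠ j →
        Disjoint ({θ^[i] x₀} : Set X) {θ^[j] x₀} := by
      intro i _ j _ hij
      simp only [Set.disjoint_singleton_left, Set.mem_singleton_iff]
      exact fun h => hij (hinj h)
    have hsum : ∑ i ∈ Finset.range m, μ {θ^[i] x₀} ≤ 1 := by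
      rw [← measure_biUnion_finset hdisj (fun i _ => hsingm _)]
      simpa using prob_le_one
    have hlow : (m : ℝ≥0∞) * μ {x₀} ≤ 1 := by
      calc (m : ℝ≥0∞) * μ {x₀} = ∑ _i ∈ Finset.range m, μ {x₀} := by
            simp [Finset.sum_const, nsmul_eq_mul]
        _ ≤ ∑ i ∈ Finset.range m, μ {θ^[i] x₀} := Finset.sum_le_sum fun i _ => horb i
        _ ≤ 1 := hsum
    have hmne : (m : ℝ≥0∞) ≠ 0 := by exact_mod_cast hmn0
    have : (1 : ℝ≥0∞) < (m : ℝ≥0∞) * μ {x₀} := by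
      have h2 : (m : ℝ≥0∞) * (m : ℝ≥0∞)⁻¹ < (m : ℝ≥0∞) * μ {x₀} := by
        rw [ENNReal.mul_lt_mul_iff_right hmne (by simp)]
        exact hm
      rwa [ENNReal.mul_inv_cancel hmne (by simp)] at h2
    exact absurd (this.trans_le hlow) (lt_irrefl _)
  · simp only [Function.Injective, not_forall] at hinj
    obtain ⟨i, j, hij, hne'⟩ := hinj
    wlog hlt : i < j generalizing i j
    · exact this j i hij.symm (Ne.symm hne') (by omega)
    set y := θ^[i] x₀ with hy
    have hper : θ^[j - i] y = y := by
      rw [hy, ← Function.iterate_add_apply, Nat.sub_add_cancel hlt.le]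
      exact hij.symm
    have hyper : y ∈ {x | ∃ n : ℕ, 0 < n ∧ θ^[n] x = x} := ⟨j - i, by omega, hper⟩
    have : μ {y} = 0 :=
      measure_mono_null (Set.singleton_subset_iff.2 hyper) haper
    have := (horb i).trans_eq this
    simp only [le_zero_iff] at this
    exact hne this

lemma real_small_set (ν : Measure ℝ) [IsProbabilityMeasure ν] [NullSingletonClass ν]
    {ε : ℝ≥0∞} (hε : ε ≠ 0) : ∃ t : ℝ, 0 < ν (Iic t) ∧ ν (Iic t) ≤ ε := by
  by_cases hall : ∀ t : ℝ, 0 < ν (Iic t)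
  · have hinter : (⋂ n : ℕ, Iic (-(n : ℝ))) = ∅ := by
      ext x
      simp only [mem_iInter, mem_Iic, mem_empty_iff_false, iff_false, not_forall]
      obtain ⟨n, hn⟩ := exists_nat_gt (-x)
      exact ⟨n, by push_neg; linarith⟩
    have htend : Tendsto (fun n : ℕ => ν (Iic (-(n : ℝ)))) atTop (𝓝 0) := by
      have := tendsto_measure_iInter_atTop (μ := ν)
        (s := fun n : ℕ => Iic (-(n : ℝ)))
        (fun n => measurableSet_Iic.nullMeasurableSet)
        (fun i j hij => Iic_subset_Iic.2 (by
          have : (i:ℝ) ≤ j := (by exact_mod_cast hij); linarith))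
        ⟨0, measure_ne_top ν _⟩
      rw [hinter] at this
      simpa [Function.comp_def] using this
    obtain ⟨n, hn⟩ := (htend.eventually_le_const (lt_of_le_of_ne (zero_le (a := ε)) (Ne.symm hε))).exists
    exact ⟨-(n : ℝ), hall _, hn⟩
  · push_neg at hall
    obtain ⟨t₀, ht₀⟩ := hall
    have ht₀0 : ν (Iic t₀) = 0 := le_antisymm ht₀ zero_le
    set T := {t : ℝ | ν (Iic t) = 0} with hT
    have hTne : T.Nonempty := ⟨t₀, ht₀0⟩
    have hTdc : ∀ s t : ℝ, t ∈ T → s ≤ t → s ∈ T := by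
      intro s t ht hst
      exact measure_mono_null (Iic_subset_Iic.2 hst) ht
    have hTbdd : BddAbove T := by
      by_contra hub
      have hzero : ∀ t : ℝ, ν (Iic t) = 0 := by
        intro t
        obtain ⟨t', ht', htt'⟩ := not_bddAbove_iff.1 hub t
        exact hTdc t t' ht' htt'.le
      have : ν univ = 0 := by
        have huniv : (⋃ n : ℕ, Iic (n : ℝ)) = univ := by
          ext x
          simp only [mem_iUnion, mem_Iic, mem_univ, iff_true]
          obtain ⟨n, hn⟩ := exists_nat_gt x
          exact ⟨n, hn.le⟩
        rw [← huniv]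
        exact measure_iUnion_null fun n => hzero _
      simp [measure_univ] at this
    set s := sSup T with hs
    have hs0 : ν (Iic s) = 0 := by
      have hIio : ν (Iio s) = 0 := by
        have hunion : (⋃ n : ℕ, Iic (s - 1 / (n + 1))) = Iio s := by
          ext x
          simp only [mem_iUnion, mem_Iic, mem_Iio]
          constructor
          · rintro ⟨n, hn⟩
            have : (0:ℝ) < 1 / ((n:ℝ) + 1) := by positivity
            linarith
          · intro hx
            obtain ⟨n, hn⟩ := exists_nat_one_div_lt (show (0:ℝ) < s - x by linarith)
            exact ⟨n, by linarith⟩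
        rw [← hunion]
        refine measure_iUnion_null fun n => ?_
        have hmem : s - 1 / ((n : ℝ) + 1) ∈ T := by
          have hlt : s - 1 / ((n : ℝ) + 1) < s := by
            have : (0:ℝ) < 1 / ((n:ℝ) + 1) := by positivity
            linarith
          obtain ⟨t', ht', htt'⟩ := exists_lt_of_lt_csSup hTne hlt
          exact hTdc _ t' ht' htt'.le
        exact hmem
      have : ν (Iic s) = ν (Iio s) + ν {s} := by
        rw [← measure_union (by simp) (measurableSet_singleton s)]
        congr 1
        ext x; simp [le_iff_lt_or_eq]
      rw [this, hIio, measure_singleton]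
      simp
    have htend : Tendsto (fun n : ℕ => ν (Iic (s + 1 / (n + 1)))) atTop (𝓝 0) := by
      have hinter : (⋂ n : ℕ, Iic (s + 1 / ((n:ℝ) + 1))) = Iic s := by
        ext x
        simp only [mem_iInter, mem_Iic]
        constructor
        · intro hx
          by_contra hgt
          push_neg at hgt
          obtain ⟨n, hn⟩ := exists_nat_one_div_lt (show (0:ℝ) < x - s by linarith)
          have := hx n
          linarith
        · intro hx n
          have : (0:ℝ) < 1 / ((n:ℝ) + 1) := by positivity
          linarith
      have := tendsto_measure_iInter_atTop (μ := ν)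
        (s := fun n : ℕ => Iic (s + 1 / ((n:ℝ) + 1)))
        (fun n => measurableSet_Iic.nullMeasurableSet)
        (fun i j hij => Iic_subset_Iic.2 (by
          have h1 : ((i:ℝ) + 1) ≤ ((j:ℝ) + 1) := by
            have : (i:ℝ) ≤ j := by exact_mod_cast hij
            linarith
          have h2 : (0:ℝ) < (i:ℝ) + 1 := by positivity
          have := one_div_le_one_div_of_le h2 h1
          linarith))
        ⟨0, measure_ne_top ν _⟩
      rw [hinter, hs0] at this
      simpa [Function.comp_def] using this
    have hev := (htend.eventually_le_const (lt_of_le_of_ne (zero_le (a := ε)) (Ne.symm hε))).exists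
    obtain ⟨n, hn⟩ := hev
    refine ⟨s + 1 / ((n:ℝ) + 1), ?_, hn⟩
    have hnotT : s + 1 / ((n:ℝ) + 1) ∉ T := by
      intro hmem
      have hle := le_csSup hTbdd hmem
      have : (0:ℝ) < 1 / ((n:ℝ) + 1) := by positivity
      rw [← hs] at hle
      linarith
    have : ν (Iic (s + 1 / ((n:ℝ) + 1))) ≠ 0 := hnotT
    exact lt_of_le_of_ne zero_le (Ne.symm this)

lemma exists_small_set (μ : Measure X) [IsProbabilityMeasure μ] (hsing : ∀ x : X, μ {x} = 0)
    {ε : ℝ≥0∞} (hε : ε ≠ 0) : ∃ A : Set X, MeasurableSet A ∧ 0 < μ A ∧ μ A ≤ ε := by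
  set f := MeasureTheory.embeddingReal X with hf
  have hfe : MeasurableEmbedding f := MeasureTheory.measurableEmbedding_embeddingReal X
  set ν := μ.map f with hν
  have : IsProbabilityMeasure ν := Measure.isProbabilityMeasure_map hfe.measurable.aemeasurable
  have : NullSingletonClass ν := by
    constructor
    intro t
    rw [hν, Measure.map_apply hfe.measurable (measurableSet_singleton t)]
    rcases Set.eq_empty_or_nonempty (f ⁻¹' {t}) with h | ⟨x, hx⟩
    · simp [h]
    · have : f ⁻¹' {t} ⊆ {x} := by
        intro y hy
        have : f y = f x := by
          simp only [mem_preimage, mem_singleton_iff] at hy hx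
          rw [hy, hx]
        exact hfe.injective this
      exact measure_mono_null this (hsing x)
  obtain ⟨t, h1, h2⟩ := real_small_set ν hε
  refine ⟨f ⁻¹' Iic t, hfe.measurable measurableSet_Iic, ?_, ?_⟩
  · rwa [hν, Measure.map_apply hfe.measurable measurableSet_Iic] at h1
  · rwa [hν, Measure.map_apply hfe.measurable measurableSet_Iic] at h2

end auxstd

/-- For an ergodic aperiodic measure preserving transformation on a
Lebesgue probability space and a sequence `b_n → ∞` with `b_n/n` decreasing to `0`,
there is `0 ≤ h ∈ L¹(μ)` with `limsup_n b_n · T^n h / n = ∞` a.e. -/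
theorem stmt18 {X : Type*} [MeasurableSpace X] [StandardBorelSpace X]
    (μ : Measure X) [IsProbabilityMeasure μ]
    (θ : X → X) (hθ : MeasurePreserving θ μ μ) (herg : Ergodic θ μ)
    (haper : μ {x | ∃ n : ℕ, 0 < n ∧ θ^[n] x = x} = 0)
    (b : ℕ → ℝ) (hb : Tendsto b atTop atTop)
    (hmono : ∀ n m : ℕ, 1 ≤ n → n ≤ m → b m / m ≤ b n / n)
    (hb0 : Tendsto (fun n : ℕ => b n / n) atTop (𝓝 0)) :
    ∃ h : X → ℝ, Measurable h ∧ (∀ x, 0 ≤ h x) ∧ Integrable h μ ∧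
      ∀ᵐ x ∂μ, Filter.limsup
        (fun n : ℕ => ENNReal.ofReal (b n * h (θ^[n] x) / n)) atTop = ⊤ := by
  classical
  have hθm : Measurable θ := hθ.measurable
  have hsing : ∀ x : X, μ {x} = 0 := singletons_null μ hθ haper
  -- K : eventual positivity threshold for b
  obtain ⟨K, hK⟩ : ∃ K : ℕ, ∀ n ≥ K, 1 ≤ b n := eventually_atTop.1 (hb.eventually_ge_atTop 1)
  -- M k : threshold where b n is at least 2^k (k+1) 4
  have hMex : ∀ k : ℕ, ∃ M : ℕ, ∀ n ≥ M, (2:ℝ)^k * ((k:ℝ)+1) * 4 ≤ b n := fun k =>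
    eventually_atTop.1 (hb.eventually_ge_atTop _)
  choose M hM using hMex
  set N : ℕ → ℕ := fun k => max (max (M k) (k + K + 1)) 1 with hNdef
  have hN1 : ∀ k, 1 ≤ N k := fun k => le_max_right _ _
  have hNM : ∀ k, M k ≤ N k := fun k => le_trans (le_max_left _ _) (le_max_left _ _)
  have hNt : ∀ k, k + K + 1 ≤ N k := fun k => le_trans (le_max_right _ _) (le_max_left _ _)
  set m : ℕ → ℕ := fun k => k + K + 1 + N k with hmdef
  have hm2 : ∀ k, (m k : ℕ) ≤ 2 * N k := fun k => by have := hNt k; simp only [hmdef]; omega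
  have hbm : ∀ k : ℕ, (2:ℝ)^k * ((k:ℝ)+1) * 4 ≤ b (m k) := fun k =>
    hM k (m k) (by have := hNM k; simp only [hmdef]; omega)
  have hbmpos : ∀ k, 0 < b (m k) := fun k => lt_of_lt_of_le (by positivity) (hbm k)
  -- the small sets A k and towers S k
  have hAex : ∀ k : ℕ, ∃ A : Set X, MeasurableSet A ∧ 0 < μ A ∧ μ A ≤ ((N k : ℝ≥0∞))⁻¹ :=
    fun k => exists_small_set μ hsing (by
      simp only [ne_eq, ENNReal.inv_eq_zero]
      exact ENNReal.natCast_ne_top _)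
  choose A hAm hA0 hAle using hAex
  set S : ℕ → Set X := fun k => twr θ (A k) (N k) with hSdef
  have hSm : ∀ k, MeasurableSet (S k) := fun k => twr_meas hθm (hAm k) (N k)
  have hSle : ∀ k, μ (S k) ≤ ENNReal.ofReal (2 / (N k : ℝ)) := by
    intro k
    have h1 : μ (S k) ≤ μ (A k) + ((N k : ℝ≥0∞))⁻¹ :=
      measure_twr_le hθ hθm (hAm k) (hN1 k)
    have h2 : μ (A k) + ((N k : ℝ≥0∞))⁻¹ ≤ ((N k : ℝ≥0∞))⁻¹ + ((N k : ℝ≥0∞))⁻¹ :=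
      add_le_add_left (hAle k) _
    have h3 : ((N k : ℝ≥0∞))⁻¹ + ((N k : ℝ≥0∞))⁻¹ = ENNReal.ofReal (2 / (N k : ℝ)) := by
      have hNpos : (0:ℝ) < (N k : ℝ) := by exact_mod_cast hN1 k
      rw [ENNReal.ofReal_div_of_pos hNpos, ENNReal.ofReal_natCast, ENNReal.ofReal_ofNat,
        div_eq_mul_inv, two_mul]
    exact h1.trans (h2.trans_eq h3)
  -- the weights c k
  set c : ℕ → ℝ := fun k => ((k:ℝ) + 1) * (m k : ℝ) / b (m k) with hcdef
  have hcpos : ∀ k, 0 < c k := by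
    intro k
    have h1 : (0:ℝ) < (m k : ℝ) := by
      have : 1 ≤ m k := by simp only [hmdef]; omega
      exact_mod_cast this
    exact div_pos (by positivity) (hbmpos k)
  have hcle : ∀ k, c k ≤ (N k : ℝ) / 2 ^ (k + 1) := by
    intro k
    have hNpos : (0:ℝ) < (N k : ℝ) := by exact_mod_cast hN1 k
    have hmk2 : (m k : ℝ) ≤ 2 * (N k : ℝ) := by exact_mod_cast hm2 k
    rw [hcdef, div_le_div_iff₀ (hbmpos k) (by positivity)]
    calc ((k:ℝ) + 1) * (m k : ℝ) * 2 ^ (k + 1)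
        ≤ ((k:ℝ) + 1) * (2 * (N k : ℝ)) * 2 ^ (k + 1) := by
          gcongr
      _ = (N k : ℝ) * ((2:ℝ)^k * ((k:ℝ)+1) * 4) := by rw [pow_succ]; ring
      _ ≤ (N k : ℝ) * b (m k) :=
          mul_le_mul_of_nonneg_left (hbm k) (by positivity)
  -- the function H and h
  set H : X → ℝ≥0∞ := fun x => ∑' k, (S k).indicator (fun _ => ENNReal.ofReal (c k)) x
    with hHdef
  have hHm : Measurable H :=
    Measurable.ennreal_tsum fun k => measurable_const.indicator (hSm k)
  have hHint : ∫⁻ x, H x ∂μ ≤ 2 := by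
    rw [hHdef]
    have := lintegral_tsum (μ := μ)
      (f := fun k x => (S k).indicator (fun _ => ENNReal.ofReal (c k)) x)
      (fun k => (measurable_const.indicator (hSm k)).aemeasurable)
    rw [this]
    have hterm : ∀ k, ∫⁻ x, (S k).indicator (fun _ => ENNReal.ofReal (c k)) x ∂μ
        ≤ (2:ℝ≥0∞)⁻¹ ^ k := by
      intro k
      rw [lintegral_indicator_const (hSm k)]
      have hNpos : (0:ℝ) < (N k : ℝ) := by exact_mod_cast hN1 k
      calc ENNReal.ofReal (c k) * μ (S k)
          ≤ ENNReal.ofReal ((N k : ℝ) / 2 ^ (k + 1)) * ENNReal.ofReal (2 / (N k : ℝ)) := by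
            gcongr
            · exact hcle k
            · exact hSle k
        _ = ENNReal.ofReal ((N k : ℝ) / 2 ^ (k + 1) * (2 / (N k : ℝ))) := by
            rw [← ENNReal.ofReal_mul (by positivity)]
        _ = ENNReal.ofReal ((2⁻¹ : ℝ) ^ k) := by
            congr 1
            rw [pow_succ, inv_pow]
            field_simp
        _ = (2:ℝ≥0∞)⁻¹ ^ k := by
            rw [ENNReal.ofReal_pow (by norm_num)]
            congr 1
            rw [ENNReal.ofReal_inv_of_pos (by norm_num), ENNReal.ofReal_ofNat]
    calc ∑' k, ∫⁻ x, (S k).indicator (fun _ => ENNReal.ofReal (c k)) x ∂μ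
        ≤ ∑' k, (2:ℝ≥0∞)⁻¹ ^ k := ENNReal.tsum_le_tsum hterm
      _ = 2 := by
        rw [ENNReal.tsum_geometric]
        rw [ENNReal.one_sub_inv_two, inv_inv]
  have hHintne : ∫⁻ x, H x ∂μ ≠ ⊤ := by
    intro hcon
    rw [hcon] at hHint
    exact absurd hHint (by simp)
  refine ⟨fun x => (H x).toReal, hHm.ennreal_toReal, fun x => ENNReal.toReal_nonneg, ?_, ?_⟩
  · exact integrable_toReal_of_lintegral_ne_top hHm.aemeasurable hHintne
  -- a.e. statement
  have hfin : μ {x | H x = ⊤} = 0 := by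
    have := ae_lt_top hHm hHintne
    rw [ae_iff] at this
    refine measure_mono_null ?_ this
    intro x hx
    simp only [mem_setOf_eq] at hx ⊢
    simp [hx]
  have hfinm : MeasurableSet {x : X | H x = ⊤} := hHm (measurableSet_singleton ⊤)
  have hfin_all : ∀ᵐ x ∂μ, ∀ n : ℕ, H (θ^[n] x) ≠ ⊤ := by
    rw [ae_all_iff]
    intro n
    rw [ae_iff]
    have : {x | ¬ H (θ^[n] x) ≠ ⊤} = θ^[n] ⁻¹' {y | H y = ⊤} := by
      ext x; simp
    rw [this, (hθ.iterate n).measure_preimage hfinm.nullMeasurableSet]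
    exact hfin
  have hhit : ∀ᵐ x ∂μ, ∀ k : ℕ, ∀ t : ℕ, ∃ n, θ^[n] (θ^[t] x) ∈ A k := by
    rw [ae_all_iff]
    exact fun k => ergodic_hits herg hθm (hAm k) (hA0 k).ne'
  filter_upwards [hfin_all, hhit] with x hxfin hxhit
  -- key step : for every k there is n ≥ k+1 with a large value
  have key : ∀ k : ℕ, ∃ n : ℕ, k + 1 ≤ n ∧
      ((k+1 : ℕ) : ℝ≥0∞) ≤ ENNReal.ofReal (b n * (H (θ^[n] x)).toReal / n) := by
    intro k
    obtain ⟨n, hn1, hn2, hnS⟩ := twr_hit (hN1 k) x (k + K + 1) (hxhit k (k + K + 1))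
    have hnm : n ≤ m k := by simp only [hmdef]; omega
    have hn1' : 1 ≤ n := by omega
    have hnK : K ≤ n := by omega
    have hnpos : (0:ℝ) < (n:ℝ) := by exact_mod_cast hn1'
    have hbn : 1 ≤ b n := hK n hnK
    -- h (θ^[n] x) ≥ c k
    have hHlow : ENNReal.ofReal (c k) ≤ H (θ^[n] x) := by
      rw [hHdef]
      have := ENNReal.le_tsum (f := fun j => (S j).indicator
        (fun _ => ENNReal.ofReal (c j)) (θ^[n] x)) k
      rwa [Set.indicator_of_mem hnS] at this
    have hhlow : c k ≤ (H (θ^[n] x)).toReal := by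
      have h1 := ENNReal.toReal_mono (hxfin n) hHlow
      rwa [ENNReal.toReal_ofReal (hcpos k).le] at h1
    -- the real inequality
    have hmpos : (0:ℝ) < (m k : ℝ) := by
      have : 1 ≤ m k := by simp only [hmdef]; omega
      exact_mod_cast this
    have hmono' := hmono n (m k) hn1' hnm
    have h1 : b (m k) * (n:ℝ) ≤ b n * (m k : ℝ) := by
      rw [div_le_div_iff₀ hmpos hnpos] at hmono'
      linarith
    have hreal : ((k:ℝ) + 1) ≤ b n * c k / n := by
      rw [hcdef]
      rw [le_div_iff₀ hnpos, mul_div_assoc']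
      rw [le_div_iff₀ (hbmpos k)]
      calc ((k:ℝ) + 1) * (n:ℝ) * b (m k) = ((k:ℝ)+1) * (b (m k) * (n:ℝ)) := by ring
        _ ≤ ((k:ℝ)+1) * (b n * (m k : ℝ)) :=
            mul_le_mul_of_nonneg_left h1 (by positivity)
        _ = b n * (((k:ℝ) + 1) * (m k : ℝ)) := by ring
    have hreal2 : ((k:ℝ) + 1) ≤ b n * (H (θ^[n] x)).toReal / n := by
      refine hreal.trans ?_
      gcongr
    refine ⟨n, by omega, ?_⟩
    calc ((k+1 : ℕ) : ℝ≥0∞) = ENNReal.ofReal ((k:ℝ) + 1) := by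
          rw [← ENNReal.ofReal_natCast (k+1)]
          congr 1
          push_cast
          ring
      _ ≤ ENNReal.ofReal (b n * (H (θ^[n] x)).toReal / n) := ENNReal.ofReal_le_ofReal hreal2
  -- conclude that the limsup is ⊤
  by_contra hne
  obtain ⟨j, hj⟩ := ENNReal.exists_nat_gt hne
  have hev : ∀ᶠ n in atTop,
      ENNReal.ofReal (b n * (H (θ^[n] x)).toReal / n) < (j : ℝ≥0∞) :=
    eventually_lt_of_limsup_lt hj
  have hfreq : ∃ᶠ n in atTop,
      (j : ℝ≥0∞) ≤ ENNReal.ofReal (b n * (H (θ^[n] x)).toReal / n) := by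
    rw [frequently_atTop]
    intro a
    obtain ⟨n, hn1, hn2⟩ := key (max a j)
    refine ⟨n, ?_, ?_⟩
    · have := le_max_left a j; omega
    · refine le_trans ?_ hn2
      have hjle : j ≤ max a j + 1 := by have := le_max_right a j; omega
      exact_mod_cast Nat.cast_le.2 hjle
  obtain ⟨n, hlt, hge⟩ := (hev.and_frequently hfreq).exists
  exact absurd (hge.trans_lt hlt) (lt_irrefl _)
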